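/- Let (b_n)_{n≥0} be a sequence of positive reals and define [0] = 0, [n] = b_{n-1}²/b_0² for n ≥ 1, [n]! = [1][2]⋯[n], [2m-1]!! = [1][3]⋯[2m-1], the nested-sum coefficients α_{2m-1,n-1} = Σ_{k₁=2m-1}^{n-1} [k₁] Σ_{k₂=2m-3}^{k₁-2} [k₂] ⋯ Σ_{k_m=1}^{k_{m-1}-2} [k_m] for 1 ≤ m ≤ ⌊n/2⌋ with α_{-1,n-1} = 1, and the polynomials ψ_n(x) = Σ_{m=0}^{⌊n/2⌋} ((-1)^m/√([n]!)) b_0^{2m-n} α_{2m-1,n-1} x^{n-2m}. Then there exist a sequence (v_n)_{n≥0} with 1 = v_0 ≤ v_1 ≤ v_2 ≤ ⋯ and a real sequence (γ_n)_{n≥1} such that D_v ψ_0 = 0 and D_v ψ_n = γ_n ψ_{n-1} for all n ≥ 1, if and only if there exists a sequence (v_n)_{n≥0} with 1 = v_0 ≤ v_1 ≤ v_2 ≤ ⋯ such that (i) with the convention v_{-1} = 0, for all n ≥ 2 and all p ≥ 1 with 2p ≤ n one has v_{n-2} v_{2p-1} + v_{2p-3} v_{n-2p} = v_n v_{2p-3}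 + v_{2p-1} v_{n-2p}, and (ii) α_{2m-1,n-1} = [2m-1]!! · (v_{n-1})! / ((v_{2m-1})! (v_{n-2m-1})!) for all n ≥ 1 and 2m ≤ n, where (v_k)! = v_0 v_1 ⋯ v_k and (v_{-1})! = (v_0)! = 1. Moreover, in this case the relations D_v ψ_n = γ_n ψ_{n-1} hold with γ_n = √(v_1 v_{n-1} / (b_0² (v_n − v_{n-2}))) for n ≥ 1. -/

import Mathlib

open Polynomial Finset

/-- The coefficient sequence `(ε_k)` associated with a sequence `v`:
`ε_1 = 1` and, for `k ≥ 2`, `ε_k = v_{k-1}/k! − ∑_{j=1}^{k-1} ε_j/(k−j)!`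
(with the junk value `ε_0 = 0`). -/
noncomputable def eps (v : ℕ → ℝ) : ℕ → ℝ
  | 0 => 0
  | 1 => 1
  | k + 2 =>
      v (k + 1) / (Nat.factorial (k + 2) : ℝ) -
        ∑ j ∈ (Finset.Icc 1 (k + 1)).attach,
          eps v j.1 / (Nat.factorial (k + 2 - j.1) : ℝ)
decreasing_by
  have hj := j.2
  simp only [Finset.mem_Icc] at hj
  omega

/-- The generalized derivation operator `D_v` acting on real polynomials:
`D_v p (x) = ∑_{k ≥ 1} ε_k x^{k-1} p^{(k)}(x)` (a finite sum on each polynomial). -/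
noncomputable def Dv (ε : ℕ → ℝ) (p : Polynomial ℝ) : Polynomial ℝ :=
  ∑ k ∈ Finset.Icc 1 p.natDegree, C (ε k) * X ^ (k - 1) * derivative^[k] p

/-- The nested-sum coefficients: `alphaC w m N` is `α_{2m-1, N}`, i.e.
`α_{2m-1,n-1} = ∑_{k₁=2m-1}^{n-1} w_{k₁} ∑_{k₂=2m-3}^{k₁-2} w_{k₂} ⋯ ∑_{k_m=1}^{k_{m-1}-2} w_{k_m}`
with `α_{-1,N} = 1` and empty sums equal to `0`. -/
noncomputable def alphaC (w : ℕ → ℝ) : ℕ → ℕ → ℝ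
  | 0, _ => 1
  | m + 1, N => ∑ k ∈ Finset.Icc (2 * m + 1) N, w k * alphaC w m (k - 2)

/-- Extension of a sequence `v : ℕ → ℝ` to integer indices by `0`
(the convention `v_{-1} = 0`). -/
noncomputable def vext (v : ℕ → ℝ) : ℤ → ℝ := fun n => if 0 ≤ n then v n.toNat else 0

/-- The brackets `[0] = 0`, `[n] = b_{n-1}²/b_0²` for `n ≥ 1`. -/
noncomputable def br (b : ℕ → ℝ) : ℕ → ℝ :=
  fun n => if n = 0 then 0 else b (n - 1) ^ 2 / b 0 ^ 2

/-- The polynomials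
`ψ_n(x) = ∑_{m=0}^{⌊n/2⌋} ((-1)^m/√([n]!)) b_0^{2m-n} α_{2m-1,n-1} x^{n-2m}`,
where `[n]! = [1][2]⋯[n]`. -/
noncomputable def psiP (b : ℕ → ℝ) (n : ℕ) : Polynomial ℝ :=
  ∑ m ∈ Finset.range (n / 2 + 1),
    C ((-1 : ℝ) ^ m / Real.sqrt (∏ k ∈ Finset.Icc 1 n, br b k) *
        b 0 ^ (2 * (m : ℤ) - (n : ℤ)) * alphaC (br b) m (n - 1)) * X ^ (n - 2 * m)
lemma eps_div_sum (v : ℕ → ℝ) (hv0 : v 0 = 1) (N : ℕ) (hN : 1 ≤ N) :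
    ∑ k ∈ Finset.Icc 1 N, eps v k / ((N - k).factorial : ℝ) = v (N - 1) / (N.factorial : ℝ) := by
  match N, hN with
  | 1, _ => simp [eps, hv0]
  | (K + 2), _ =>
    rw [Finset.sum_Icc_succ_top (by omega : 1 ≤ K + 2)]
    have h1 : eps v (K + 2) = v (K + 1) / (Nat.factorial (K + 2) : ℝ) -
        ∑ j ∈ Finset.Icc 1 (K + 1), eps v j / (Nat.factorial (K + 2 - j) : ℝ) := by
      rw [eps, ← Finset.sum_attach (Finset.Icc 1 (K + 1)) (fun j => eps v j / (Nat.factorial (K + 2 - j) : ℝ))]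
    simp only [Nat.sub_self, Nat.factorial_zero, Nat.cast_one, div_one, h1]
    have he : K + 2 - 1 = K + 1 := rfl
    rw [he]; ring

lemma eps_desc_sum (v : ℕ → ℝ) (hv0 : v 0 = 1) (N : ℕ) (hN : 1 ≤ N) :
    ∑ k ∈ Finset.Icc 1 N, eps v k * (N.descFactorial k : ℝ) = v (N - 1) := by
  have h := eps_div_sum v hv0 N hN
  have hfac : (N.factorial : ℝ) ≠ 0 := Nat.cast_ne_zero.2 N.factorial_ne_zero
  have : ∀ k ∈ Finset.Icc 1 N, eps v k * (N.descFactorial k : ℝ)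
      = eps v k / ((N - k).factorial : ℝ) * (N.factorial : ℝ) := by
    intro k hk
    simp only [Finset.mem_Icc] at hk
    have hd : ((N - k).factorial : ℝ) * (N.descFactorial k : ℝ) = (N.factorial : ℝ) := by
      rw [← Nat.cast_mul, Nat.factorial_mul_descFactorial hk.2]
    have hne : ((N - k).factorial : ℝ) ≠ 0 := Nat.cast_ne_zero.2 (Nat.factorial_ne_zero _)
    rw [div_mul_eq_mul_div, eq_div_iff hne, mul_assoc, mul_comm ((N.descFactorial k : ℝ)), hd]
  rw [Finset.sum_congr rfl this, ← Finset.sum_mul, h, div_mul_cancel₀ _ hfac]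
noncomputable def cM (b : ℕ → ℝ) (n m : ℕ) : ℝ :=
  (-1 : ℝ) ^ m / Real.sqrt (∏ k ∈ Finset.Icc 1 n, br b k) *
    b 0 ^ (2 * (m : ℤ) - (n : ℤ)) * alphaC (br b) m (n - 1)

lemma psiP_eq (b : ℕ → ℝ) (n : ℕ) :
    psiP b n = ∑ m ∈ Finset.range (n / 2 + 1), C (cM b n m) * X ^ (n - 2 * m) := rfl

lemma psiP_natDegree_le (b : ℕ → ℝ) (n : ℕ) : (psiP b n).natDegree ≤ n := by
  rw [psiP_eq]
  apply Polynomial.natDegree_sum_le_of_forall_le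
  intro m _
  exact le_trans (Polynomial.natDegree_C_mul_X_pow_le _ _) (Nat.sub_le _ _)

lemma Dv_eq_sum (ε : ℕ → ℝ) (p : Polynomial ℝ) (M : ℕ) (h : p.natDegree ≤ M) :
    Dv ε p = ∑ k ∈ Finset.Icc 1 M, C (ε k) * X ^ (k - 1) * derivative^[k] p := by
  rw [Dv]
  apply Finset.sum_subset
  · intro k hk; simp only [Finset.mem_Icc] at *; omega
  · intro k hk hk2
    simp only [Finset.mem_Icc] at hk hk2
    rw [Polynomial.iterate_derivative_eq_zero (by omega : p.natDegree < k), mul_zero]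

lemma Dv_monomial_sum (v : ℕ → ℝ) (hv0 : v 0 = 1) (a : ℝ) (N M : ℕ) (h : N ≤ M) :
    ∑ k ∈ Finset.Icc 1 M, C (eps v k) * X ^ (k - 1) * derivative^[k] (C a * X ^ N)
      = if N = 0 then 0 else C (a * v (N - 1)) * X ^ (N - 1) := by
  have hterm : ∀ k ∈ Finset.Icc 1 M, C (eps v k) * X ^ (k - 1) * derivative^[k] (C a * X ^ N)
      = C (eps v k * a * (N.descFactorial k : ℝ)) * X ^ (k - 1 + (N - k)) := by
    intro k _
    rw [Polynomial.iterate_derivative_C_mul, Polynomial.iterate_derivative_X_pow_eq_C_mul,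
      map_mul, map_mul, pow_add]
    ring
  rw [Finset.sum_congr rfl hterm]
  rcases Nat.eq_zero_or_pos N with hN | hN
  · subst hN
    rw [if_pos rfl]
    apply Finset.sum_eq_zero
    intro k hk
    simp only [Finset.mem_Icc] at hk
    rw [show Nat.descFactorial 0 k = 0 from Nat.descFactorial_eq_zero_iff_lt.2 (by omega)]
    simp
  · rw [if_neg (by omega)]
    rw [← Finset.sum_subset (Finset.Icc_subset_Icc_right h)
      (fun k hk hk2 => by
        simp only [Finset.mem_Icc] at hk hk2
        rw [show N.descFactorial k = 0 from Nat.descFactorial_eq_zero_iff_lt.2 (by omega)]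
        simp)]
    rw [Finset.sum_congr rfl (fun k hk => by
      simp only [Finset.mem_Icc] at hk
      rw [show k - 1 + (N - k) = N - 1 by omega])]
    rw [← Finset.sum_mul, ← map_sum]
    congr 2
    rw [← eps_desc_sum v hv0 N hN, Finset.mul_sum]
    exact Finset.sum_congr rfl (fun k _ => by ring)

lemma Dv_psi (b v : ℕ → ℝ) (hv0 : v 0 = 1) (n : ℕ) (hn : 1 ≤ n) :
    Dv (eps v) (psiP b n) = ∑ m ∈ Finset.range ((n - 1) / 2 + 1),
      C (cM b n m * v (n - 2 * m - 1)) * X ^ (n - 2 * m - 1) := by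
  rw [Dv_eq_sum _ _ n (psiP_natDegree_le b n), psiP_eq]
  have h1 : ∀ k ∈ Finset.Icc 1 n,
      C (eps v k) * X ^ (k - 1) * derivative^[k] (∑ m ∈ Finset.range (n / 2 + 1), C (cM b n m) * X ^ (n - 2 * m))
      = ∑ m ∈ Finset.range (n / 2 + 1), C (eps v k) * X ^ (k - 1) * derivative^[k] (C (cM b n m) * X ^ (n - 2 * m)) := by
    intro k _
    rw [Polynomial.iterate_derivative_sum, Finset.mul_sum]
  rw [Finset.sum_congr rfl h1, Finset.sum_comm]
  have h2 : ∀ m ∈ Finset.range (n / 2 + 1),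
      ∑ k ∈ Finset.Icc 1 n, C (eps v k) * X ^ (k - 1) * derivative^[k] (C (cM b n m) * X ^ (n - 2 * m))
      = if n - 2 * m = 0 then 0 else C (cM b n m * v (n - 2 * m - 1)) * X ^ (n - 2 * m - 1) :=
    fun m _ => Dv_monomial_sum v hv0 (cM b n m) (n - 2 * m) n (Nat.sub_le _ _)
  rw [Finset.sum_congr rfl h2]
  rcases Nat.even_or_odd n with ⟨t, rfl⟩ | ⟨t, rfl⟩
  · have hn2 : (t + t) / 2 + 1 = (((t + t) - 1) / 2 + 1) + 1 := by omega
    rw [hn2, Finset.sum_range_succ, if_pos (by omega), add_zero]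
    exact Finset.sum_congr rfl (fun m hm => by
      simp only [Finset.mem_range] at hm
      rw [if_neg (by omega)])
  · have hn2 : (2 * t + 1) / 2 = ((2 * t + 1) - 1) / 2 := by omega
    rw [hn2]
    exact Finset.sum_congr rfl (fun m hm => by
      simp only [Finset.mem_range] at hm
      rw [if_neg (by omega)])

/-! ### Positivity and basic facts -/

lemma v_one_le (v : ℕ → ℝ) (hv0 : v 0 = 1) (hmono : ∀ n, v n ≤ v (n + 1)) (k : ℕ) :
    1 ≤ v k := hv0 ▸ monotone_nat_of_le_succ hmono (Nat.zero_le k)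

lemma v_pos (v : ℕ → ℝ) (hv0 : v 0 = 1) (hmono : ∀ n, v n ≤ v (n + 1)) (k : ℕ) :
    0 < v k := lt_of_lt_of_le one_pos (v_one_le v hv0 hmono k)

lemma Pv_pos (v : ℕ → ℝ) (hv0 : v 0 = 1) (hmono : ∀ n, v n ≤ v (n + 1)) (n : ℕ) :
    0 < ∏ i ∈ Finset.range n, v i :=
  Finset.prod_pos fun i _ => v_pos v hv0 hmono i

lemma br_pos (b : ℕ → ℝ) (hb : ∀ n, 0 < b n) (k : ℕ) (hk : 1 ≤ k) : 0 < br b k := by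
  rw [br, if_neg (by omega)]
  have h1 := hb (k - 1); have h2 := hb 0
  positivity

lemma br_one (b : ℕ → ℝ) (hb : ∀ n, 0 < b n) : br b 1 = 1 := by
  rw [br, if_neg (by omega)]
  exact div_self (pow_ne_zero _ (hb 0).ne')

lemma DD_pos (b : ℕ → ℝ) (hb : ∀ n, 0 < b n) (m : ℕ) :
    0 < ∏ j ∈ Finset.range m, br b (2 * j + 1) :=
  Finset.prod_pos fun j _ => br_pos b hb _ (by omega)

lemma F_pos (b : ℕ → ℝ) (hb : ∀ n, 0 < b n) (n : ℕ) :
    0 < ∏ k ∈ Finset.Icc 1 n, br b k :=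
  Finset.prod_pos fun k hk => br_pos b hb k (Finset.mem_Icc.mp hk).1

lemma sqrtF_pos (b : ℕ → ℝ) (hb : ∀ n, 0 < b n) (n : ℕ) :
    0 < Real.sqrt (∏ k ∈ Finset.Icc 1 n, br b k) := Real.sqrt_pos.mpr (F_pos b hb n)

lemma sqrtF_succ (b : ℕ → ℝ) (hb : ∀ n, 0 < b n) (n : ℕ) (hn : 1 ≤ n) :
    Real.sqrt (∏ k ∈ Finset.Icc 1 n, br b k)
      = Real.sqrt (∏ k ∈ Finset.Icc 1 (n - 1), br b k) * Real.sqrt (br b n) := by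
  rw [← Real.sqrt_mul (F_pos b hb (n - 1)).le]
  congr 1
  rw [show n = (n - 1) + 1 by omega, Finset.prod_Icc_succ_top (by omega)]
  simp

/-! ### Consequences of condition (ii) -/

lemma alpha_one (b : ℕ → ℝ) (N : ℕ) :
    alphaC (br b) 1 N = ∑ k ∈ Finset.Icc 1 N, br b k := by
  rw [alphaC]
  exact Finset.sum_congr (by norm_num) fun k _ => by rw [alphaC, mul_one]

lemma hkey (b v : ℕ → ℝ) (hb : ∀ n, 0 < b n) (hv0 : v 0 = 1) (hmono : ∀ n, v n ≤ v (n + 1))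
    (hA : ∀ n m : ℕ, 1 ≤ n → 2 * m ≤ n → alphaC (br b) m (n - 1) =
      (∏ j ∈ Finset.range m, br b (2 * j + 1)) * (∏ i ∈ Finset.range n, v i) /
        ((∏ i ∈ Finset.range (2 * m), v i) * (∏ i ∈ Finset.range (n - 2 * m), v i)))
    (k : ℕ) (hk : 2 ≤ k) :
    br b k * v 1 = v (k - 1) * (v k - v (k - 2)) := by
  have hS : ∀ n : ℕ, 2 ≤ n → ∑ j ∈ Finset.Icc 1 (n - 1), br b j
      = v (n - 2) * v (n - 1) / v 1 := by
    intro n hn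
    have h := hA n 1 (by omega) (by omega)
    rw [alpha_one] at h
    rw [h]
    have h2 : ∏ i ∈ Finset.range n, v i
        = (∏ i ∈ Finset.range (n - 2), v i) * v (n - 2) * v (n - 1) := by
      rw [show n = (n - 2) + 1 + 1 by omega, Finset.prod_range_succ, Finset.prod_range_succ]
      congr 2 <;> omega
    have h3 : ∏ i ∈ Finset.range (2 * 1), v i = v 1 := by
      rw [show 2 * 1 = 2 from rfl, Finset.prod_range_succ, Finset.prod_range_one, hv0, one_mul]
    have h4 : (∏ j ∈ Finset.range 1, br b (2 * j + 1)) = 1 := by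
      rw [Finset.prod_range_one, show 2 * 0 + 1 = 1 from rfl, br_one b hb]
    rw [h2, h3, h4, show n - 2 * 1 = n - 2 from rfl]
    have hP := (Pv_pos v hv0 hmono (n - 2)).ne'
    have hv1 := (v_pos v hv0 hmono 1).ne'
    field_simp
  have hsplit : ∑ j ∈ Finset.Icc 1 ((k + 1) - 1), br b j
      = (∑ j ∈ Finset.Icc 1 (k - 1), br b j) + br b k := by
    rw [show (k + 1) - 1 = k from rfl, show k = (k - 1) + 1 by omega,
      Finset.sum_Icc_succ_top (by omega)]
    congr 2 <;> omega
  have h1 := hS (k + 1) (by omega)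
  have h2 := hS k hk
  rw [hsplit, h2] at h1
  have hv1 := (v_pos v hv0 hmono 1).ne'
  have he1 : (k + 1) - 2 = k - 1 := by omega
  have he2 : (k + 1) - 1 = k := rfl
  rw [he1, he2] at h1
  field_simp at h1
  linarith [h1]

lemma vext_neg (v : ℕ → ℝ) : vext v (-1) = 0 := by rw [vext, if_neg (by omega)]

lemma vext_nonneg_eq (v : ℕ → ℝ) (z : ℤ) (hz : 0 ≤ z) : vext v z = v z.toNat := by
  rw [vext, if_pos hz]

lemma gform (b v : ℕ → ℝ) (hb : ∀ n, 0 < b n) (hv0 : v 0 = 1) (hmono : ∀ n, v n ≤ v (n + 1))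
    (hA : ∀ n m : ℕ, 1 ≤ n → 2 * m ≤ n → alphaC (br b) m (n - 1) =
      (∏ j ∈ Finset.range m, br b (2 * j + 1)) * (∏ i ∈ Finset.range n, v i) /
        ((∏ i ∈ Finset.range (2 * m), v i) * (∏ i ∈ Finset.range (n - 2 * m), v i)))
    (n : ℕ) (hn : 1 ≤ n) :
    Real.sqrt (v 1 * v (n - 1) / (b 0 ^ 2 * (v n - vext v ((n : ℤ) - 2))))
      = v (n - 1) / (b 0 * Real.sqrt (br b n)) := by
  have hb0 := hb 0
  rcases eq_or_lt_of_le hn with h1 | h2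
  · -- n = 1
    subst h1
    have hv1 := v_pos v hv0 hmono 1
    rw [show ((1:ℕ):ℤ) - 2 = -1 by norm_num, vext_neg, sub_zero,
      show (1:ℕ) - 1 = 0 from rfl, hv0, br_one b hb, Real.sqrt_one, mul_one, mul_one]
    have h5 : v 1 / (b 0 ^ 2 * v 1) = (1 / b 0) ^ 2 := by
      field_simp
    rw [h5, Real.sqrt_sq (by positivity)]
  · -- 2 ≤ n
    have hn2 : 2 ≤ n := h2
    have hve : vext v ((n : ℤ) - 2) = v (n - 2) := by
      rw [vext_nonneg_eq v _ (by omega)]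
      congr 1
      omega
    have hk := hkey b v hb hv0 hmono hA n hn2
    have hx := v_pos v hv0 hmono (n - 1)
    have hv1 := v_pos v hv0 hmono 1
    have hbr := br_pos b hb n (by omega)
    have hsub : v n - v (n - 2) = br b n * v 1 / v (n - 1) := by
      field_simp
      linarith [hk]
    have hinner : v 1 * v (n - 1) / (b 0 ^ 2 * (v n - vext v ((n : ℤ) - 2)))
        = (v (n - 1) / (b 0 * Real.sqrt (br b n))) ^ 2 := by
      rw [hve, hsub, div_pow, mul_pow, Real.sq_sqrt hbr.le]
      rw [div_eq_div_iff (by positivity) (by positivity)]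
      field_simp
    rw [hinner, Real.sqrt_sq (by positivity)]

lemma cM_id_iff (b v : ℕ → ℝ) (hb : ∀ n, 0 < b n) (n m : ℕ) (hn : 2 ≤ n) :
    (cM b n m * v (n - 1 - 2 * m) = v (n - 1) / (b 0 * Real.sqrt (br b n)) * cM b (n - 1) m)
      ↔ alphaC (br b) m (n - 1) * v (n - 1 - 2 * m) = v (n - 1) * alphaC (br b) m (n - 2) := by
  have hb0 : b 0 ≠ 0 := (hb 0).ne'
  have hs : Real.sqrt (∏ k ∈ Finset.Icc 1 (n - 1), br b k) ≠ 0 := (sqrtF_pos b hb (n - 1)).ne'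
  have hr : Real.sqrt (br b n) ≠ 0 := (Real.sqrt_pos.mpr (br_pos b hb n (by omega))).ne'
  set c := (-1 : ℝ) ^ m / (Real.sqrt (∏ k ∈ Finset.Icc 1 (n - 1), br b k) * Real.sqrt (br b n))
      * b 0 ^ (2 * (m : ℤ) - (n : ℤ)) with hc
  have hcne : c ≠ 0 := by
    apply mul_ne_zero
    · exact div_ne_zero (pow_ne_zero _ (by norm_num)) (mul_ne_zero hs hr)
    · exact zpow_ne_zero _ hb0
  have hL : cM b n m * v (n - 1 - 2 * m) = c * (alphaC (br b) m (n - 1) * v (n - 1 - 2 * m)) := by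
    rw [cM, sqrtF_succ b hb n (by omega), hc]
    ring
  have hR : v (n - 1) / (b 0 * Real.sqrt (br b n)) * cM b (n - 1) m
      = c * (v (n - 1) * alphaC (br b) m (n - 2)) := by
    rw [cM, show ((n - 1 : ℕ) : ℤ) = (n : ℤ) - 1 by omega,
      show 2 * (m : ℤ) - ((n : ℤ) - 1) = (2 * (m : ℤ) - (n : ℤ)) + 1 from by ring,
      zpow_add₀ hb0, zpow_one, show n - 1 - 1 = n - 2 from by omega, hc]
    field_simp
  rw [hL, hR, mul_right_inj' hcne]

lemma alpha_id_of_hA (b v : ℕ → ℝ) (hb : ∀ n, 0 < b n) (hv0 : v 0 = 1)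
    (hmono : ∀ n, v n ≤ v (n + 1))
    (hA : ∀ n m : ℕ, 1 ≤ n → 2 * m ≤ n → alphaC (br b) m (n - 1) =
      (∏ j ∈ Finset.range m, br b (2 * j + 1)) * (∏ i ∈ Finset.range n, v i) /
        ((∏ i ∈ Finset.range (2 * m), v i) * (∏ i ∈ Finset.range (n - 2 * m), v i)))
    (n m : ℕ) (hn : 2 ≤ n) (hm : 2 * m ≤ n - 1) :
    alphaC (br b) m (n - 1) * v (n - 1 - 2 * m) = v (n - 1) * alphaC (br b) m (n - 2) := by
  have h1 := hA n m (by omega) (by omega)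
  have h2 := hA (n - 1) m (by omega) (by omega)
  rw [show n - 1 - 1 = n - 2 from by omega] at h2
  rw [h1, h2]
  have e1 : ∏ i ∈ Finset.range n, v i = (∏ i ∈ Finset.range (n - 1), v i) * v (n - 1) := by
    have h : n = (n - 1) + 1 := by omega
    conv_lhs => rw [h]
    rw [Finset.prod_range_succ]
  have e2 : ∏ i ∈ Finset.range (n - 2 * m), v i
      = (∏ i ∈ Finset.range (n - 1 - 2 * m), v i) * v (n - 1 - 2 * m) := by
    have h : n - 2 * m = (n - 1 - 2 * m) + 1 := by omega
    conv_lhs => rw [h]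
    rw [Finset.prod_range_succ]
  rw [e1, e2]
  have p1 := (Pv_pos v hv0 hmono (2 * m)).ne'
  have p2 := (Pv_pos v hv0 hmono (n - 1 - 2 * m)).ne'
  have p3 := (v_pos v hv0 hmono (n - 1 - 2 * m)).ne'
  have p4 := (v_pos v hv0 hmono (n - 1)).ne'
  field_simp

lemma scalar_id (b v : ℕ → ℝ) (hb : ∀ n, 0 < b n) (hv0 : v 0 = 1)
    (hmono : ∀ n, v n ≤ v (n + 1))
    (hA : ∀ n m : ℕ, 1 ≤ n → 2 * m ≤ n → alphaC (br b) m (n - 1) =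
      (∏ j ∈ Finset.range m, br b (2 * j + 1)) * (∏ i ∈ Finset.range n, v i) /
        ((∏ i ∈ Finset.range (2 * m), v i) * (∏ i ∈ Finset.range (n - 2 * m), v i)))
    (n m : ℕ) (hn : 1 ≤ n) (hm : 2 * m ≤ n - 1) :
    cM b n m * v (n - 1 - 2 * m) = v (n - 1) / (b 0 * Real.sqrt (br b n)) * cM b (n - 1) m := by
  rcases eq_or_lt_of_le hn with h1 | h2
  · have hm0 : m = 0 := by omega
    subst hm0
    subst h1
    rw [cM, cM]
    simp only [alphaC]
    rw [show Finset.Icc 1 1 = {1} from rfl, Finset.prod_singleton, br_one b hb, Real.sqrt_one,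
      show Finset.Icc 1 0 = (∅ : Finset ℕ) from rfl, Finset.prod_empty, Real.sqrt_one, hv0]
    norm_num
  · exact (cM_id_iff b v hb n m h2).mpr (alpha_id_of_hA b v hb hv0 hmono hA n m h2 hm)

lemma Dv_psi' (b v : ℕ → ℝ) (hv0 : v 0 = 1) (n : ℕ) (hn : 1 ≤ n) :
    Dv (eps v) (psiP b n) = ∑ m ∈ Finset.range ((n - 1) / 2 + 1),
      C (cM b n m * v (n - 1 - 2 * m)) * X ^ (n - 1 - 2 * m) := by
  rw [Dv_psi b v hv0 n hn]
  exact Finset.sum_congr rfl fun m _ => by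
    rw [show n - 2 * m - 1 = n - 1 - 2 * m from by omega]

lemma Dv_psi0 (b : ℕ → ℝ) (ε : ℕ → ℝ) : Dv ε (psiP b 0) = 0 := by
  rw [Dv, Nat.le_zero.mp (psiP_natDegree_le b 0)]
  simp

lemma Mpart (b v : ℕ → ℝ) (hb : ∀ n, 0 < b n) (hv0 : v 0 = 1)
    (hmono : ∀ n, v n ≤ v (n + 1))
    (hA : ∀ n m : ℕ, 1 ≤ n → 2 * m ≤ n → alphaC (br b) m (n - 1) =
      (∏ j ∈ Finset.range m, br b (2 * j + 1)) * (∏ i ∈ Finset.range n, v i) /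
        ((∏ i ∈ Finset.range (2 * m), v i) * (∏ i ∈ Finset.range (n - 2 * m), v i)))
    (n : ℕ) (hn : 1 ≤ n) :
    Dv (eps v) (psiP b n) =
      C (Real.sqrt (v 1 * v (n - 1) / (b 0 ^ 2 * (v n - vext v ((n : ℤ) - 2))))) *
        psiP b (n - 1) := by
  rw [Dv_psi' b v hv0 n hn, gform b v hb hv0 hmono hA n hn, psiP_eq b (n - 1), Finset.mul_sum]
  apply Finset.sum_congr rfl
  intro m hm
  rw [← mul_assoc, ← C_mul]
  congr 2
  exact scalar_id b v hb hv0 hmono hA n m hn (by simp only [Finset.mem_range] at hm; omega)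

lemma coeff_sum_CXpow (c : ℕ → ℝ) (N m : ℕ) (hm : 2 * m ≤ N) :
    (∑ m' ∈ Finset.range (N / 2 + 1), C (c m') * X ^ (N - 2 * m')).coeff (N - 2 * m) = c m := by
  rw [Polynomial.finset_sum_coeff]
  rw [Finset.sum_eq_single m]
  · rw [Polynomial.coeff_C_mul, Polynomial.coeff_X_pow, if_pos rfl, mul_one]
  · intro m' hm' hne
    simp only [Finset.mem_range] at hm'
    rw [Polynomial.coeff_C_mul, Polynomial.coeff_X_pow, if_neg (by omega), mul_zero]
  · intro hnot
    exact absurd (Finset.mem_range.mpr (by omega)) hnot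

lemma extract (b v : ℕ → ℝ) (g : ℕ → ℝ) (hv0 : v 0 = 1) (n : ℕ) (hn : 1 ≤ n)
    (hgn : Dv (eps v) (psiP b n) = C (g n) * psiP b (n - 1)) (m : ℕ) (hm : 2 * m ≤ n - 1) :
    cM b n m * v (n - 1 - 2 * m) = g n * cM b (n - 1) m := by
  rw [Dv_psi' b v hv0 n hn, psiP_eq b (n - 1), Finset.mul_sum] at hgn
  have hgn2 : (∑ m' ∈ Finset.range ((n - 1) / 2 + 1),
        C (cM b n m' * v (n - 1 - 2 * m')) * X ^ (n - 1 - 2 * m'))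
      = ∑ m' ∈ Finset.range ((n - 1) / 2 + 1),
        C (g n * cM b (n - 1) m') * X ^ (n - 1 - 2 * m') :=
    hgn.trans (Finset.sum_congr rfl fun m' _ => by rw [← mul_assoc, ← C_mul])
  have h1 := congrArg (fun q : Polynomial ℝ => q.coeff (n - 1 - 2 * m)) hgn2
  simp only [coeff_sum_CXpow _ (n - 1) m hm] at h1
  exact h1

lemma alphaC_zero (w : ℕ → ℝ) (N : ℕ) : alphaC w 0 N = 1 := rfl

lemma g_eq (b v : ℕ → ℝ) (g : ℕ → ℝ) (hb : ∀ n, 0 < b n) (hv0 : v 0 = 1)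
    (hg : ∀ n : ℕ, 1 ≤ n → Dv (eps v) (psiP b n) = C (g n) * psiP b (n - 1))
    (n : ℕ) (hn : 1 ≤ n) :
    g n = v (n - 1) / (b 0 * Real.sqrt (br b n)) := by
  have h := extract b v g hv0 n hn (hg n hn) 0 (by omega)
  have hb0 : b 0 ≠ 0 := (hb 0).ne'
  have hs : Real.sqrt (∏ k ∈ Finset.Icc 1 (n - 1), br b k) ≠ 0 := (sqrtF_pos b hb (n - 1)).ne'
  have hr : Real.sqrt (br b n) ≠ 0 := (Real.sqrt_pos.mpr (br_pos b hb n hn)).ne'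
  have hcne : cM b (n - 1) 0 ≠ 0 := by
    rw [cM, pow_zero, alphaC_zero, mul_one]
    exact mul_ne_zero (div_ne_zero one_ne_zero hs) (zpow_ne_zero _ hb0)
  apply mul_right_cancel₀ hcne
  rw [← h]
  rw [cM, cM, pow_zero, sqrtF_succ b hb n hn,
    show ((n - 1 : ℕ) : ℤ) = (n : ℤ) - 1 by omega,
    show 2 * ((0 : ℕ) : ℤ) - ((n : ℤ) - 1) = (2 * ((0 : ℕ) : ℤ) - (n : ℤ)) + 1 from by ring,
    zpow_add₀ hb0, zpow_one]
  simp only [alphaC_zero, Nat.mul_zero, Nat.sub_zero]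
  field_simp

lemma hrec_of_hg (b v : ℕ → ℝ) (g : ℕ → ℝ) (hb : ∀ n, 0 < b n) (hv0 : v 0 = 1)
    (hg : ∀ n : ℕ, 1 ≤ n → Dv (eps v) (psiP b n) = C (g n) * psiP b (n - 1))
    (n m : ℕ) (hn : 2 ≤ n) (hm : 2 * m ≤ n - 1) :
    alphaC (br b) m (n - 1) * v (n - 1 - 2 * m) = v (n - 1) * alphaC (br b) m (n - 2) := by
  apply (cM_id_iff b v hb n m hn).mp
  have h := extract b v g hv0 n (by omega) (hg n (by omega)) m hm
  rwa [g_eq b v g hb hv0 hg n (by omega)] at h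

lemma alpha_rec (w : ℕ → ℝ) (m N : ℕ) (h : 2 * m + 1 ≤ N) :
    alphaC w (m + 1) N = alphaC w (m + 1) (N - 1) + w N * alphaC w m (N - 2) := by
  have hN : N - 1 + 1 = N := by omega
  rw [alphaC, alphaC]
  conv_lhs => rw [← hN]
  rw [Finset.sum_Icc_succ_top (by omega), hN]

lemma alpha_base (b : ℕ → ℝ) : ∀ m : ℕ,
    alphaC (br b) m (2 * m - 1) = ∏ j ∈ Finset.range m, br b (2 * j + 1) := by
  intro m
  induction m with
  | zero => simp [alphaC_zero]
  | succ m ih =>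
    rw [alphaC, show 2 * (m + 1) - 1 = 2 * m + 1 from by omega, Finset.Icc_self,
      Finset.sum_singleton, show 2 * m + 1 - 2 = 2 * m - 1 from by omega, ih,
      Finset.prod_range_succ]
    ring

lemma hA_of_hrec (b v : ℕ → ℝ) (hb : ∀ n, 0 < b n) (hv0 : v 0 = 1)
    (hmono : ∀ n, v n ≤ v (n + 1))
    (hR : ∀ n m : ℕ, 2 ≤ n → 2 * m ≤ n - 1 →
      alphaC (br b) m (n - 1) * v (n - 1 - 2 * m) = v (n - 1) * alphaC (br b) m (n - 2)) :
    ∀ n m : ℕ, 1 ≤ n → 2 * m ≤ n → alphaC (br b) m (n - 1) =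
      (∏ j ∈ Finset.range m, br b (2 * j + 1)) * (∏ i ∈ Finset.range n, v i) /
        ((∏ i ∈ Finset.range (2 * m), v i) * (∏ i ∈ Finset.range (n - 2 * m), v i)) := by
  intro n m
  rcases Nat.eq_zero_or_pos m with rfl | hm
  · intro hn _
    have hP := (Pv_pos v hv0 hmono n).ne'
    simp only [alphaC_zero, Finset.range_zero, Finset.prod_empty, Nat.mul_zero,
      Nat.sub_zero, one_mul]
    rw [div_self hP]
  · intro _ hmn
    induction n, hmn using Nat.le_induction with
    | base =>
      have hP := (Pv_pos v hv0 hmono (2 * m)).ne'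
      rw [alpha_base b m, Nat.sub_self, Finset.range_zero, Finset.prod_empty, mul_one,
        mul_div_assoc, div_self hP, mul_one]
    | succ n hn2m ih =>
      have hRi := hR (n + 1) m (by omega) (by omega)
      rw [show n + 1 - 1 = n from rfl, show n + 1 - 2 = n - 1 from by omega,
        show n - 2 * m = n - 2 * m from rfl] at hRi
      rw [ih (by omega)] at hRi
      rw [show n + 1 - 1 = n from rfl]
      have e1 : ∏ i ∈ Finset.range (n + 1), v i = (∏ i ∈ Finset.range n, v i) * v n :=
        Finset.prod_range_succ v n
      have e2 : ∏ i ∈ Finset.range (n + 1 - 2 * m), v i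
          = (∏ i ∈ Finset.range (n - 2 * m), v i) * v (n - 2 * m) := by
        have h : n + 1 - 2 * m = (n - 2 * m) + 1 := by omega
        rw [h, Finset.prod_range_succ]
      have hQ := (Pv_pos v hv0 hmono (2 * m)).ne'
      have hRn := (Pv_pos v hv0 hmono (n - 2 * m)).ne'
      have hu := (v_pos v hv0 hmono (n - 2 * m)).ne'
      have hPn := (Pv_pos v hv0 hmono n).ne'
      rw [e1, e2, eq_div_iff (by exact mul_ne_zero hQ (mul_ne_zero hRn hu))]
      field_simp at hRi
      linear_combination hRi

lemma alg_core (Dp w r q x y z s t u o a B1 B2 aN aN1 aN2 : ℝ)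
    (hDp : 0 < Dp) (hw : 0 < w) (hx : 0 < x) (hs : 0 < s)
    (h1 : aN * ((r * s * t) * (q * a)) = (Dp * B1) * (w * x * y))
    (h2 : aN1 * ((r * s * t) * q) = (Dp * B1) * (w * x))
    (h3 : aN2 * (r * (q * a)) = Dp * w)
    (h4 : aN = aN1 + B2 * aN2)
    (h5 : B1 * o = s * (t - u))
    (h6 : B2 * o = x * (y - z)) :
    z * t + u * a = y * u + t * a := by
  have hcan : (Dp * w * (s * x)) * ((t - u) * y)
      = (Dp * w * (s * x)) * ((t - u) * a + (y - z) * t) := by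
    linear_combination (o * (r * s * t * q * a)) * h4 - o * h1 + (o * a) * h2
      + (o * B2 * s * t) * h3 + (Dp * w * x * a - Dp * w * x * y) * h5 + (Dp * w * s * t) * h6
  have E2 := mul_left_cancel₀ (by positivity : Dp * w * (s * x) ≠ 0) hcan
  linear_combination E2

lemma condi_nat (b v : ℕ → ℝ) (hb : ∀ n, 0 < b n) (hv0 : v 0 = 1)
    (hmono : ∀ n, v n ≤ v (n + 1))
    (hA : ∀ n m : ℕ, 1 ≤ n → 2 * m ≤ n → alphaC (br b) m (n - 1) =
      (∏ j ∈ Finset.range m, br b (2 * j + 1)) * (∏ i ∈ Finset.range n, v i) /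
        ((∏ i ∈ Finset.range (2 * m), v i) * (∏ i ∈ Finset.range (n - 2 * m), v i)))
    (N P : ℕ) (hP : 2 ≤ P) (hNP : 2 * P ≤ N) :
    v (N - 2) * v (2 * P - 1) + v (2 * P - 3) * v (N - 2 * P)
      = v N * v (2 * P - 3) + v (2 * P - 1) * v (N - 2 * P) := by
  -- splitting identities
  have sp1 : ∏ i ∈ Finset.range (N + 1), v i
      = (∏ i ∈ Finset.range (N - 1), v i) * v (N - 1) * v N := by
    have h : N + 1 = (N - 1) + 1 + 1 := by omega
    conv_lhs => rw [h]
    rw [Finset.prod_range_succ, Finset.prod_range_succ, show N - 1 + 1 = N from by omega]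
  have sp2 : ∏ i ∈ Finset.range N, v i = (∏ i ∈ Finset.range (N - 1), v i) * v (N - 1) := by
    have h : N = (N - 1) + 1 := by omega
    conv_lhs => rw [h]
    rw [Finset.prod_range_succ]
  have sp3 : ∏ i ∈ Finset.range (2 * P), v i
      = (∏ i ∈ Finset.range (2 * P - 2), v i) * v (2 * P - 2) * v (2 * P - 1) := by
    have h : 2 * P = (2 * P - 2) + 1 + 1 := by omega
    conv_lhs => rw [h]
    rw [Finset.prod_range_succ, Finset.prod_range_succ, show 2 * P - 2 + 1 = 2 * P - 1 from by omega]
  have sp4 : ∏ i ∈ Finset.range (N + 1 - 2 * P), v i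
      = (∏ i ∈ Finset.range (N - 2 * P), v i) * v (N - 2 * P) := by
    have h : N + 1 - 2 * P = (N - 2 * P) + 1 := by omega
    conv_lhs => rw [h]
    rw [Finset.prod_range_succ]
  have spD : ∏ j ∈ Finset.range P, br b (2 * j + 1)
      = (∏ j ∈ Finset.range (P - 1), br b (2 * j + 1)) * br b (2 * P - 1) := by
    have h : P = (P - 1) + 1 := by omega
    conv_lhs => rw [h]
    rw [Finset.prod_range_succ, show 2 * (P - 1) + 1 = 2 * P - 1 from by omega]
  -- hA instances in multiplied form
  have hd1 : (∏ i ∈ Finset.range (2 * P), v i) * (∏ i ∈ Finset.range (N + 1 - 2 * P), v i) ≠ 0 :=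
    mul_ne_zero (Pv_pos v hv0 hmono _).ne' (Pv_pos v hv0 hmono _).ne'
  have hd2 : (∏ i ∈ Finset.range (2 * P), v i) * (∏ i ∈ Finset.range (N - 2 * P), v i) ≠ 0 :=
    mul_ne_zero (Pv_pos v hv0 hmono _).ne' (Pv_pos v hv0 hmono _).ne'
  have hd3 : (∏ i ∈ Finset.range (2 * P - 2), v i) * (∏ i ∈ Finset.range (N + 1 - 2 * P), v i) ≠ 0 :=
    mul_ne_zero (Pv_pos v hv0 hmono _).ne' (Pv_pos v hv0 hmono _).ne'
  have hA1 := hA (N + 1) P (by omega) (by omega)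
  rw [show N + 1 - 1 = N from rfl] at hA1
  have hA1' := hA1.symm ▸ (div_mul_cancel₀
    ((∏ j ∈ Finset.range P, br b (2 * j + 1)) * ∏ i ∈ Finset.range (N + 1), v i) hd1)
  have hA2 := hA N P (by omega) (by omega)
  have hA2' := hA2.symm ▸ (div_mul_cancel₀
    ((∏ j ∈ Finset.range P, br b (2 * j + 1)) * ∏ i ∈ Finset.range N, v i) hd2)
  have hA3 := hA (N - 1) (P - 1) (by omega) (by omega)
  rw [show N - 1 - 1 = N - 2 from by omega,
    show N - 1 - 2 * (P - 1) = N + 1 - 2 * P from by omega,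
    show 2 * (P - 1) = 2 * P - 2 from by omega] at hA3
  have hA3' := hA3.symm ▸ (div_mul_cancel₀
    ((∏ j ∈ Finset.range (P - 1), br b (2 * j + 1)) * ∏ i ∈ Finset.range (N - 1), v i) hd3)
  rw [sp1, sp3, sp4, spD] at hA1'
  rw [sp2, sp3, spD] at hA2'
  rw [sp4] at hA3'
  have h4 : alphaC (br b) P N = alphaC (br b) P (N - 1) + br b N * alphaC (br b) (P - 1) (N - 2) := by
    have h := alpha_rec (br b) (P - 1) N (by omega)
    rwa [show P - 1 + 1 = P from by omega] at h
  have h5 : br b (2 * P - 1) * v 1 = v (2 * P - 2) * (v (2 * P - 1) - v (2 * P - 3)) := by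
    have h := hkey b v hb hv0 hmono hA (2 * P - 1) (by omega)
    rwa [show 2 * P - 1 - 1 = 2 * P - 2 from by omega,
      show 2 * P - 1 - 2 = 2 * P - 3 from by omega] at h
  have h6 : br b N * v 1 = v (N - 1) * (v N - v (N - 2)) := hkey b v hb hv0 hmono hA N (by omega)
  exact alg_core (∏ j ∈ Finset.range (P - 1), br b (2 * j + 1))
    (∏ i ∈ Finset.range (N - 1), v i) (∏ i ∈ Finset.range (2 * P - 2), v i)
    (∏ i ∈ Finset.range (N - 2 * P), v i)
    (v (N - 1)) (v N) (v (N - 2)) (v (2 * P - 2)) (v (2 * P - 1)) (v (2 * P - 3)) (v 1)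
    (v (N - 2 * P)) (br b (2 * P - 1)) (br b N)
    (alphaC (br b) P N) (alphaC (br b) P (N - 1)) (alphaC (br b) (P - 1) (N - 2))
    (DD_pos b hb (P - 1)) (Pv_pos v hv0 hmono (N - 1)) (v_pos v hv0 hmono (N - 1))
    (v_pos v hv0 hmono (2 * P - 2))
    (by linear_combination hA1') (by linear_combination hA2') (by linear_combination hA3')
    h4 h5 h6

lemma condi (b v : ℕ → ℝ) (hb : ∀ n, 0 < b n) (hv0 : v 0 = 1)
    (hmono : ∀ n, v n ≤ v (n + 1))
    (hA : ∀ n m : ℕ, 1 ≤ n → 2 * m ≤ n → alphaC (br b) m (n - 1) =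
      (∏ j ∈ Finset.range m, br b (2 * j + 1)) * (∏ i ∈ Finset.range n, v i) /
        ((∏ i ∈ Finset.range (2 * m), v i) * (∏ i ∈ Finset.range (n - 2 * m), v i))) :
    ∀ n p : ℤ, 2 ≤ n → 1 ≤ p → 2 * p ≤ n →
      vext v (n - 2) * vext v (2 * p - 1) + vext v (2 * p - 3) * vext v (n - 2 * p) =
        vext v n * vext v (2 * p - 3) + vext v (2 * p - 1) * vext v (n - 2 * p) := by
  intro n p hn hp hnp
  lift n to ℕ using (by omega)
  lift p to ℕ using (by omega)
  have hn' : 2 ≤ n := by exact_mod_cast hn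
  have hp' : 1 ≤ p := by exact_mod_cast hp
  have hnp' : 2 * p ≤ n := by exact_mod_cast hnp
  have e1 : vext v ((n : ℤ) - 2) = v (n - 2) := by
    rw [vext_nonneg_eq v _ (by omega)]; congr 1; omega
  have e2 : vext v (2 * (p : ℤ) - 1) = v (2 * p - 1) := by
    rw [vext_nonneg_eq v _ (by omega)]; congr 1; omega
  have e4 : vext v ((n : ℤ) - 2 * p) = v (n - 2 * p) := by
    rw [vext_nonneg_eq v _ (by omega)]; congr 1; omega
  have e5 : vext v (n : ℤ) = v n := by
    rw [vext_nonneg_eq v _ (by omega), Int.toNat_natCast]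
  rcases eq_or_lt_of_le hp' with h1 | h2
  · have hp1 : p = 1 := h1.symm
    subst hp1
    have e3 : vext v (2 * ((1 : ℕ) : ℤ) - 3) = 0 := by
      rw [vext, if_neg (by omega)]
    rw [e1, e2, e3, e4, e5]
    norm_num [mul_comm]
  · have e3 : vext v (2 * (p : ℤ) - 3) = v (2 * p - 3) := by
      rw [vext_nonneg_eq v _ (by omega)]; congr 1; omega
    rw [e1, e2, e3, e4, e5]
    exact condi_nat b v hb hv0 hmono hA n p h2 hnp'
theorem stmt_0 (b : ℕ → ℝ) (hb : ∀ n : ℕ, 0 < b n) :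
    ((∃ v : ℕ → ℝ, v 0 = 1 ∧ (∀ n : ℕ, v n ≤ v (n + 1)) ∧
        ∃ g : ℕ → ℝ,
          Dv (eps v) (psiP b 0) = 0 ∧
          ∀ n : ℕ, 1 ≤ n → Dv (eps v) (psiP b n) = C (g n) * psiP b (n - 1)) ↔
      (∃ v : ℕ → ℝ, v 0 = 1 ∧ (∀ n : ℕ, v n ≤ v (n + 1)) ∧
        (∀ n p : ℤ, 2 ≤ n → 1 ≤ p → 2 * p ≤ n →
          vext v (n - 2) * vext v (2 * p - 1) + vext v (2 * p - 3) * vext v (n - 2 * p) =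
            vext v n * vext v (2 * p - 3) + vext v (2 * p - 1) * vext v (n - 2 * p)) ∧
        (∀ n m : ℕ, 1 ≤ n → 2 * m ≤ n →
          alphaC (br b) m (n - 1) =
            (∏ j ∈ Finset.range m, br b (2 * j + 1)) *
              (∏ i ∈ Finset.range n, v i) /
              ((∏ i ∈ Finset.range (2 * m), v i) *
                (∏ i ∈ Finset.range (n - 2 * m), v i))))) ∧
    (∀ v : ℕ → ℝ, v 0 = 1 → (∀ n : ℕ, v n ≤ v (n + 1)) →
      (∀ n p : ℤ, 2 ≤ n → 1 ≤ p → 2 * p ≤ n →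
        vext v (n - 2) * vext v (2 * p - 1) + vext v (2 * p - 3) * vext v (n - 2 * p) =
          vext v n * vext v (2 * p - 3) + vext v (2 * p - 1) * vext v (n - 2 * p)) →
      (∀ n m : ℕ, 1 ≤ n → 2 * m ≤ n →
        alphaC (br b) m (n - 1) =
          (∏ j ∈ Finset.range m, br b (2 * j + 1)) *
            (∏ i ∈ Finset.range n, v i) /
            ((∏ i ∈ Finset.range (2 * m), v i) *
              (∏ i ∈ Finset.range (n - 2 * m), v i))) →
      ∀ n : ℕ, 1 ≤ n →
        Dv (eps v) (psiP b n) =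
          C (Real.sqrt (v 1 * v (n - 1) / (b 0 ^ 2 * (v n - vext v ((n : ℤ) - 2))))) *
            psiP b (n - 1)) := by

  constructor
  · constructor
    · rintro ⟨v, hv0, hmono, g, hg0, hg⟩
      have hR : ∀ n m : ℕ, 2 ≤ n → 2 * m ≤ n - 1 →
          alphaC (br b) m (n - 1) * v (n - 1 - 2 * m) = v (n - 1) * alphaC (br b) m (n - 2) :=
        fun n m hn hm => hrec_of_hg b v g hb hv0 hg n m hn hm
      have hA := hA_of_hrec b v hb hv0 hmono hR
      exact ⟨v, hv0, hmono, condi b v hb hv0 hmono hA, hA⟩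
    · rintro ⟨v, hv0, hmono, hi, hA⟩
      exact ⟨v, hv0, hmono,
        fun n => Real.sqrt (v 1 * v (n - 1) / (b 0 ^ 2 * (v n - vext v ((n : ℤ) - 2)))),
        Dv_psi0 b _, fun n hn => Mpart b v hb hv0 hmono hA n hn⟩
  · intro v hv0 hmono hi hA n hn
    exact Mpart b v hb hv0 hmono hA n hn
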